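/- Let μ ∈ ℝ, σ > 0 and β ≥ 0. Then the (1,1) entry of the matrix K_β(μ,σ) = ∫₀^∞ u uᵀ f_{μ,σ}^{1+2β} dx − ξ ξᵀ (where ξ = ∫₀^∞ u f_{μ,σ}^{1+β} dx) satisfies ∫₀^∞ u₁(x)² f_{μ,σ}(x)^{1+2β} dx − ( ∫₀^∞ u₁(x) f_{μ,σ}(x)^{1+β} dx )² = L*(β,μ,σ) · (1 + 2β + 4β²σ²)/σ − L**(β,μ,σ) · σ²β². -/

import Mathlib

open Real MeasureTheory Set

/-- The log-normal density with parameters `μ` and `σ`. -/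
noncomputable def lognormalPdf (μ σ : ℝ) (x : ℝ) : ℝ :=
  if 0 < x then
    (1 / (x * σ * Real.sqrt (2 * Real.pi))) * Real.exp (-(Real.log x - μ) ^ 2 / (2 * σ ^ 2))
  else 0

/-- First component of the score function of the log-normal model. -/
noncomputable def scoreU1 (μ σ : ℝ) (x : ℝ) : ℝ := (Real.log x - μ) / σ ^ 2

/-- Second component of the score function of the log-normal model. -/
noncomputable def scoreU2 (μ σ : ℝ) (x : ℝ) : ℝ := ((Real.log x - μ) ^ 2 - σ ^ 2) / σ ^ 3

/-- The factor `L*(β, μ, σ)`. -/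
noncomputable def Lstar (β μ σ : ℝ) : ℝ :=
  Real.exp (-2 * β * μ + 2 * β ^ 2 * σ ^ 2 / (1 + 2 * β)) /
    (σ ^ (2 * β + 1) * (2 * Real.pi) ^ β * (1 + 2 * β) ^ ((5 : ℝ) / 2))

/-- The factor `L**(β, μ, σ)`. -/
noncomputable def Lstarstar (β μ σ : ℝ) : ℝ :=
  Real.exp (-2 * β * μ + β ^ 2 * σ ^ 2 / (1 + β)) /
    (σ ^ (2 * β + 2) * (2 * Real.pi) ^ β * (1 + β) ^ 3)

lemma gauss1 {a : ℝ} (ha : 0 < a) : ∫ x : ℝ, x * Real.exp (-a * x ^ 2) = 0 := by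
  have hderiv : ∀ x : ℝ, HasDerivAt (fun t : ℝ => -(2*a)⁻¹ * Real.exp (-a * t ^ 2))
      (x * Real.exp (-a * x ^ 2)) x := by
    intro x
    have h1 : HasDerivAt (fun t : ℝ => -a * t ^ 2) (-a * (2 * x)) x := by
      simpa using ((hasDerivAt_pow 2 x).const_mul (-a))
    have h2 := (h1.exp).const_mul (-(2*a)⁻¹)
    refine h2.congr_deriv ?_
    have h2a : (2*a)⁻¹ * (2*a) = 1 := inv_mul_cancel₀ (by positivity)
    linear_combination (x * Real.exp (-a * x ^ 2)) * h2a
  have hint : Integrable fun x : ℝ => x * Real.exp (-a * x ^ 2) :=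
    integrable_mul_exp_neg_mul_sq ha
  have hF : Integrable fun t : ℝ => -(2*a)⁻¹ * Real.exp (-a * t ^ 2) :=
    (integrable_exp_neg_mul_sq ha).const_mul _
  exact integral_eq_zero_of_hasDerivAt_of_integrable hderiv hint hF

lemma int_sq_gauss {a : ℝ} (ha : 0 < a) :
    Integrable fun x : ℝ => x ^ 2 * Real.exp (-a * x ^ 2) := by
  have := integrable_rpow_mul_exp_neg_mul_sq ha (s := 2) (by norm_num)
  refine this.congr ?_
  refine ae_of_all _ fun x => ?_
  norm_num [Real.rpow_natCast]

lemma gauss2 {a : ℝ} (ha : 0 < a) :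
    ∫ x : ℝ, x ^ 2 * Real.exp (-a * x ^ 2) = Real.sqrt (π / a) / (2 * a) := by
  have hderiv : ∀ x : ℝ, HasDerivAt (fun t : ℝ => -(2*a)⁻¹ * (t * Real.exp (-a * t ^ 2)))
      (x ^ 2 * Real.exp (-a * x ^ 2) - (2*a)⁻¹ * Real.exp (-a * x ^ 2)) x := by
    intro x
    have h1 : HasDerivAt (fun t : ℝ => -a * t ^ 2) (-a * (2 * x)) x := by
      simpa using ((hasDerivAt_pow 2 x).const_mul (-a))
    have h2 : HasDerivAt (fun t : ℝ => t * Real.exp (-a * t ^ 2))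
        (1 * Real.exp (-a * x ^ 2) + x * (Real.exp (-a * x ^ 2) * (-a * (2 * x)))) x :=
      (hasDerivAt_id x).mul h1.exp
    have h3 := h2.const_mul (-(2*a)⁻¹)
    refine h3.congr_deriv ?_
    have h2a : (2*a)⁻¹ * (2*a) = 1 := inv_mul_cancel₀ (by positivity)
    linear_combination (x ^ 2 * Real.exp (-a * x ^ 2)) * h2a
  have hi2 := int_sq_gauss ha
  have hi0 : Integrable fun x : ℝ => (2*a)⁻¹ * Real.exp (-a * x ^ 2) :=
    (integrable_exp_neg_mul_sq ha).const_mul _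
  have hF : Integrable fun t : ℝ => -(2*a)⁻¹ * (t * Real.exp (-a * t ^ 2)) :=
    (integrable_mul_exp_neg_mul_sq ha).const_mul _
  have h0 := integral_eq_zero_of_hasDerivAt_of_integrable hderiv (hi2.sub hi0) hF
  rw [integral_sub hi2 hi0, sub_eq_zero] at h0
  rw [h0, MeasureTheory.integral_const_mul, integral_gaussian]
  field_simp


lemma gauss_cm2 {a : ℝ} (ha : 0 < a) (c : ℝ) :
    ∫ x : ℝ, (x - c) ^ 2 * Real.exp (-a * x ^ 2)
      = Real.sqrt (π / a) * (c ^ 2 + 1 / (2 * a)) := by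
  have hi2 := int_sq_gauss ha
  have hi1 : Integrable fun x : ℝ => (-(2*c)) * (x * Real.exp (-a * x ^ 2)) :=
    (integrable_mul_exp_neg_mul_sq ha).const_mul _
  have hi0 : Integrable fun x : ℝ => c ^ 2 * Real.exp (-a * x ^ 2) :=
    (integrable_exp_neg_mul_sq ha).const_mul _
  have heq : (fun x : ℝ => (x - c) ^ 2 * Real.exp (-a * x ^ 2))
      = fun x : ℝ => (x ^ 2 * Real.exp (-a * x ^ 2)
        + (-(2*c)) * (x * Real.exp (-a * x ^ 2))) + c ^ 2 * Real.exp (-a * x ^ 2) := by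
    funext x; ring
  have hi12 : Integrable (fun x : ℝ => x ^ 2 * Real.exp (-a * x ^ 2)
      + (-(2*c)) * (x * Real.exp (-a * x ^ 2))) volume := hi2.add hi1
  rw [heq, integral_add hi12 hi0, integral_add hi2 hi1,
    MeasureTheory.integral_const_mul, MeasureTheory.integral_const_mul,
    gauss1 ha, gauss2 ha, integral_gaussian]
  ring

lemma gauss_cm1 {a : ℝ} (ha : 0 < a) (c : ℝ) :
    ∫ x : ℝ, (x - c) * Real.exp (-a * x ^ 2) = -(c * Real.sqrt (π / a)) := by
  have hi1 : Integrable fun x : ℝ => x * Real.exp (-a * x ^ 2) :=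
    integrable_mul_exp_neg_mul_sq ha
  have hi0 : Integrable fun x : ℝ => (-c) * Real.exp (-a * x ^ 2) :=
    (integrable_exp_neg_mul_sq ha).const_mul _
  have heq : (fun x : ℝ => (x - c) * Real.exp (-a * x ^ 2))
      = fun x : ℝ => x * Real.exp (-a * x ^ 2) + (-c) * Real.exp (-a * x ^ 2) := by
    funext x; ring
  rw [heq, integral_add hi1 hi0, MeasureTheory.integral_const_mul, gauss1 ha, integral_gaussian]
  ring

lemma gauss_shift2 {a : ℝ} (ha : 0 < a) (m c : ℝ) :
    ∫ y : ℝ, (y - c) ^ 2 * Real.exp (-a * (y - m) ^ 2)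
      = Real.sqrt (π / a) * ((c - m) ^ 2 + 1 / (2 * a)) := by
  calc ∫ y : ℝ, (y - c) ^ 2 * Real.exp (-a * (y - m) ^ 2)
      = ∫ y : ℝ, ((y - m) - (c - m)) ^ 2 * Real.exp (-a * (y - m) ^ 2) := by
        congr 1; funext y; ring_nf
    _ = ∫ x : ℝ, (x - (c - m)) ^ 2 * Real.exp (-a * x ^ 2) := by
        exact MeasureTheory.integral_sub_right_eq_self
          (μ := (volume : Measure ℝ)) (fun x : ℝ => (x - (c - m)) ^ 2 * Real.exp (-a * x ^ 2)) m
    _ = Real.sqrt (π / a) * ((c - m) ^ 2 + 1 / (2 * a)) := gauss_cm2 ha (c - m)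

lemma gauss_shift1 {a : ℝ} (ha : 0 < a) (m c : ℝ) :
    ∫ y : ℝ, (y - c) * Real.exp (-a * (y - m) ^ 2)
      = -((c - m) * Real.sqrt (π / a)) := by
  calc ∫ y : ℝ, (y - c) * Real.exp (-a * (y - m) ^ 2)
      = ∫ y : ℝ, ((y - m) - (c - m)) * Real.exp (-a * (y - m) ^ 2) := by
        congr 1; funext y; ring_nf
    _ = ∫ x : ℝ, (x - (c - m)) * Real.exp (-a * x ^ 2) := by
        exact MeasureTheory.integral_sub_right_eq_self
          (μ := (volume : Measure ℝ)) (fun x : ℝ => (x - (c - m)) * Real.exp (-a * x ^ 2)) m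
    _ = -((c - m) * Real.sqrt (π / a)) := gauss_cm1 ha (c - m)


lemma log_substitution (g : ℝ → ℝ) :
    ∫ x in Ioi (0:ℝ), g x = ∫ y : ℝ, Real.exp y * g (Real.exp y) := by
  have h := MeasureTheory.integral_image_eq_integral_abs_deriv_smul
    MeasurableSet.univ
    (fun x (_ : x ∈ (univ : Set ℝ)) => (Real.hasDerivAt_exp x).hasDerivWithinAt)
    (Real.exp_injective.injOn) g
  rw [Set.image_univ, Real.range_exp] at h
  simpa [Real.abs_exp, smul_eq_mul] using h

lemma lognormal_integrand (μ σ : ℝ) (hσ : 0 < σ) (p : ℝ) (y : ℝ) :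
    Real.exp y * lognormalPdf μ σ (Real.exp y) ^ p
      = (σ * Real.sqrt (2*π)) ^ (-p) *
        (Real.exp ((1 - p) * y) * Real.exp (-p * (y - μ)^2 / (2*σ^2))) := by
  have hC : (0:ℝ) < σ * Real.sqrt (2*π) := by positivity
  rw [lognormalPdf, if_pos (Real.exp_pos y), Real.log_exp, one_div]
  rw [Real.mul_rpow (by positivity) (Real.exp_pos _).le,
      Real.inv_rpow (by positivity)]
  have h1 : (Real.exp y * σ * Real.sqrt (2*π)) ^ p
      = Real.exp (y * p) * (σ * Real.sqrt (2*π)) ^ p := by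
    rw [mul_assoc, Real.mul_rpow (Real.exp_pos _).le hC.le, ← Real.exp_mul]
  rw [h1, ← Real.exp_mul, Real.rpow_neg hC.le, mul_inv]
  have key : Real.exp y * ((Real.exp (y*p))⁻¹ * Real.exp (-(y - μ)^2/(2*σ^2) * p))
      = Real.exp ((1 - p)*y) * Real.exp (-p*(y - μ)^2/(2*σ^2)) := by
    rw [← Real.exp_neg, ← Real.exp_add, ← Real.exp_add, ← Real.exp_add, Real.exp_eq_exp]
    ring
  calc Real.exp y * ((Real.exp (y*p))⁻¹ * ((σ * Real.sqrt (2*π)) ^ p)⁻¹ *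
        Real.exp (-(y - μ)^2/(2*σ^2) * p))
      = ((σ * Real.sqrt (2*π)) ^ p)⁻¹ *
        (Real.exp y * ((Real.exp (y*p))⁻¹ * Real.exp (-(y - μ)^2/(2*σ^2) * p))) := by ring
    _ = _ := by rw [key]


/-- The `(1,1)` entry of the matrix `K_β(μ,σ)`. -/
theorem K_entry_11 (μ σ β : ℝ) (hσ : 0 < σ) (hβ : 0 ≤ β) :
    (∫ x in Ioi (0 : ℝ), scoreU1 μ σ x ^ 2 * lognormalPdf μ σ x ^ (1 + 2 * β)) -
        (∫ x in Ioi (0 : ℝ), scoreU1 μ σ x * lognormalPdf μ σ x ^ (1 + β)) ^ 2 =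
      Lstar β μ σ * ((1 + 2 * β + 4 * β ^ 2 * σ ^ 2) / σ) -
        Lstarstar β μ σ * (σ ^ 2 * β ^ 2) := by
  have hσ2 : (0:ℝ) < σ ^ 2 := by positivity
  have hP : (0:ℝ) < 1 + 2 * β := by linarith
  have hQ : (0:ℝ) < 1 + β := by linarith
  have hA : (0:ℝ) < (1 + 2 * β) / (2 * σ ^ 2) := by positivity
  have hA' : (0:ℝ) < (1 + β) / (2 * σ ^ 2) := by positivity
  -- First integral
  have h1 : (∫ x in Ioi (0 : ℝ), scoreU1 μ σ x ^ 2 * lognormalPdf μ σ x ^ (1 + 2 * β))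
      = ((σ * Real.sqrt (2*π)) ^ (-(1 + 2*β)) * Real.exp (-2*β*μ + 2*β^2*σ^2/(1+2*β)) / σ^4) *
        (Real.sqrt (π / ((1 + 2*β)/(2*σ^2))) *
          ((μ - (μ - 2*β*σ^2/(1+2*β))) ^ 2 + 1 / (2 * ((1 + 2*β)/(2*σ^2))))) := by
    rw [log_substitution (fun x => scoreU1 μ σ x ^ 2 * lognormalPdf μ σ x ^ (1 + 2 * β))]
    have hpt : ∀ y : ℝ,
        Real.exp y * (scoreU1 μ σ (Real.exp y) ^ 2 * lognormalPdf μ σ (Real.exp y) ^ (1 + 2 * β))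
        = ((σ * Real.sqrt (2*π)) ^ (-(1 + 2*β)) * Real.exp (-2*β*μ + 2*β^2*σ^2/(1+2*β)) / σ^4) *
          ((y - μ) ^ 2 * Real.exp (-((1 + 2*β)/(2*σ^2)) * (y - (μ - 2*β*σ^2/(1+2*β))) ^ 2)) := by
      intro y
      have hli := lognormal_integrand μ σ hσ (1 + 2*β) y
      have hexp : Real.exp ((1 - (1 + 2*β)) * y) * Real.exp (-(1 + 2*β) * (y - μ)^2 / (2*σ^2))
          = Real.exp (-2*β*μ + 2*β^2*σ^2/(1+2*β)) *
            Real.exp (-((1 + 2*β)/(2*σ^2)) * (y - (μ - 2*β*σ^2/(1+2*β))) ^ 2) := by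
        rw [← Real.exp_add, ← Real.exp_add, Real.exp_eq_exp]
        field_simp
        ring
      have hsc : scoreU1 μ σ (Real.exp y) = (y - μ) / σ ^ 2 := by
        rw [scoreU1, Real.log_exp]
      calc Real.exp y * (scoreU1 μ σ (Real.exp y) ^ 2 * lognormalPdf μ σ (Real.exp y) ^ (1 + 2*β))
          = scoreU1 μ σ (Real.exp y) ^ 2 *
              (Real.exp y * lognormalPdf μ σ (Real.exp y) ^ (1 + 2*β)) := by ring
        _ = ((y - μ) / σ ^ 2) ^ 2 * ((σ * Real.sqrt (2*π)) ^ (-(1 + 2*β)) *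
              (Real.exp (-2*β*μ + 2*β^2*σ^2/(1+2*β)) *
               Real.exp (-((1 + 2*β)/(2*σ^2)) * (y - (μ - 2*β*σ^2/(1+2*β))) ^ 2))) := by
            rw [hsc, hli, hexp]
        _ = _ := by field_simp
    simp only [hpt]
    rw [MeasureTheory.integral_const_mul, gauss_shift2 hA (μ - 2*β*σ^2/(1+2*β)) μ]
  -- Second integral
  have h2 : (∫ x in Ioi (0 : ℝ), scoreU1 μ σ x * lognormalPdf μ σ x ^ (1 + β))
      = ((σ * Real.sqrt (2*π)) ^ (-(1 + β)) * Real.exp (-β*μ + β^2*σ^2/(2*(1+β))) / σ^2) *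
        (-((μ - (μ - β*σ^2/(1+β))) * Real.sqrt (π / ((1 + β)/(2*σ^2))))) := by
    rw [log_substitution (fun x => scoreU1 μ σ x * lognormalPdf μ σ x ^ (1 + β))]
    have hpt : ∀ y : ℝ,
        Real.exp y * (scoreU1 μ σ (Real.exp y) * lognormalPdf μ σ (Real.exp y) ^ (1 + β))
        = ((σ * Real.sqrt (2*π)) ^ (-(1 + β)) * Real.exp (-β*μ + β^2*σ^2/(2*(1+β))) / σ^2) *
          ((y - μ) * Real.exp (-((1 + β)/(2*σ^2)) * (y - (μ - β*σ^2/(1+β))) ^ 2)) := by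
      intro y
      have hli := lognormal_integrand μ σ hσ (1 + β) y
      have hexp : Real.exp ((1 - (1 + β)) * y) * Real.exp (-(1 + β) * (y - μ)^2 / (2*σ^2))
          = Real.exp (-β*μ + β^2*σ^2/(2*(1+β))) *
            Real.exp (-((1 + β)/(2*σ^2)) * (y - (μ - β*σ^2/(1+β))) ^ 2) := by
        rw [← Real.exp_add, ← Real.exp_add, Real.exp_eq_exp]
        field_simp
        ring
      have hsc : scoreU1 μ σ (Real.exp y) = (y - μ) / σ ^ 2 := by
        rw [scoreU1, Real.log_exp]
      calc Real.exp y * (scoreU1 μ σ (Real.exp y) * lognormalPdf μ σ (Real.exp y) ^ (1 + β))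
          = scoreU1 μ σ (Real.exp y) *
              (Real.exp y * lognormalPdf μ σ (Real.exp y) ^ (1 + β)) := by ring
        _ = ((y - μ) / σ ^ 2) * ((σ * Real.sqrt (2*π)) ^ (-(1 + β)) *
              (Real.exp (-β*μ + β^2*σ^2/(2*(1+β))) *
               Real.exp (-((1 + β)/(2*σ^2)) * (y - (μ - β*σ^2/(1+β))) ^ 2))) := by
            rw [hsc, hli, hexp]
        _ = _ := by field_simp
    simp only [hpt]
    rw [MeasureTheory.integral_const_mul, gauss_shift1 hA' (μ - β*σ^2/(1+β)) μ]
  rw [h1, h2]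
  have E1 : ((σ * Real.sqrt (2*π)) ^ (-(1 + 2*β)) * Real.exp (-2*β*μ + 2*β^2*σ^2/(1+2*β)) / σ^4) *
        (Real.sqrt (π / ((1 + 2*β)/(2*σ^2))) *
          ((μ - (μ - 2*β*σ^2/(1+2*β))) ^ 2 + 1 / (2 * ((1 + 2*β)/(2*σ^2)))))
      = Lstar β μ σ * ((1 + 2 * β + 4 * β ^ 2 * σ ^ 2) / σ) := by
    have hP : (0:ℝ) < 1 + 2 * β := by linarith
    have h2π : (0:ℝ) < 2 * π := by positivity
    have hτ : (0:ℝ) < Real.sqrt (2*π) := Real.sqrt_pos.mpr h2π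
    have hsqrt : Real.sqrt (π / ((1 + 2*β)/(2*σ^2)))
        = σ * Real.sqrt (2*π) / (1 + 2*β) ^ ((2:ℝ)⁻¹) := by
      have h1 : π / ((1 + 2*β)/(2*σ^2)) = σ^2 * ((2*π) / (1 + 2*β)) := by
        field_simp
      rw [h1, Real.sqrt_mul (sq_nonneg σ), Real.sqrt_sq hσ.le,
        Real.sqrt_div h2π.le, Real.sqrt_eq_rpow (1 + 2*β),
        show ((1:ℝ)/2) = (2:ℝ)⁻¹ by norm_num]
      ring
    have hmom : (μ - (μ - 2*β*σ^2/(1+2*β))) ^ 2 + 1 / (2 * ((1 + 2*β)/(2*σ^2)))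
        = σ^2 * (1 + 2*β + 4*β^2*σ^2) / (1+2*β)^2 := by
      field_simp
      ring
    rw [hsqrt, hmom, Lstar]
    have hCsplit : (σ * Real.sqrt (2*π)) ^ (-(1 + 2*β))
        = (σ ^ (1 + 2*β) * Real.sqrt (2*π) ^ (1 + 2*β))⁻¹ := by
      rw [← Real.mul_rpow hσ.le hτ.le, Real.rpow_neg (by positivity)]
    rw [hCsplit]
    have e1 : ((1+2*β):ℝ)^((2:ℝ)⁻¹) ≠ 0 := (Real.rpow_pos_of_pos hP _).ne'
    have e2 : ((1+2*β):ℝ)^((5:ℝ)/2) ≠ 0 := (Real.rpow_pos_of_pos hP _).ne'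
    have e3 : (σ:ℝ)^(2*β+1) ≠ 0 := (Real.rpow_pos_of_pos hσ _).ne'
    have e4 : ((2*π):ℝ)^β ≠ 0 := (Real.rpow_pos_of_pos h2π _).ne'
    have e5 : (σ:ℝ)^(1+2*β) ≠ 0 := (Real.rpow_pos_of_pos hσ _).ne'
    have e6 : (Real.sqrt (2*π))^(1+2*β) ≠ 0 := (Real.rpow_pos_of_pos hτ _).ne'
    field_simp [e1,e2,e3,e4,e5,e6,hσ.ne',hτ.ne',hP.ne']
    have hsp : Real.sqrt 2 * Real.sqrt π = (2*π)^((1:ℝ)/2) := by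
      rw [← Real.sqrt_mul (by norm_num : (0:ℝ) ≤ 2) π, Real.sqrt_eq_rpow]
    have key : Real.sqrt 2 * Real.sqrt π * σ^(2*β+1) * (2*π)^β * (1+2*β)^((5:ℝ)/2)
        = σ^(1+2*β) * (Real.sqrt 2 * Real.sqrt π)^(1+2*β) *
          ((1+2*β)^((1:ℝ)/2) * (1+2*β)^(2:ℕ)) := by
      rw [hsp, ← Real.rpow_mul h2π.le]
      rw [show ((1:ℝ)/2*(1+2*β)) = (1:ℝ)/2 + β by ring, Real.rpow_add h2π]
      rw [show ((5:ℝ)/2) = (1:ℝ)/2 + ((2:ℕ):ℝ) by norm_num, Real.rpow_add hP,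
        Real.rpow_natCast]
      rw [show (2*β+1 : ℝ) = 1+2*β by ring]
      ring
    rw [← Real.sqrt_mul (by norm_num : (0:ℝ) ≤ 2) π] at key
    linear_combination key
  have E2 : (((σ * Real.sqrt (2*π)) ^ (-(1 + β)) * Real.exp (-β*μ + β^2*σ^2/(2*(1+β))) / σ^2) *
        (-((μ - (μ - β*σ^2/(1+β))) * Real.sqrt (π / ((1 + β)/(2*σ^2)))))) ^ 2
      = Lstarstar β μ σ * (σ ^ 2 * β ^ 2) := by
    have hQ : (0:ℝ) < 1 + β := by linarith
    have h2π : (0:ℝ) < 2 * π := by positivity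
    have hτ : (0:ℝ) < Real.sqrt (2*π) := Real.sqrt_pos.mpr h2π
    have hsqrt : Real.sqrt (π / ((1 + β)/(2*σ^2)))
        = σ * Real.sqrt (2*π) / (1 + β) ^ ((2:ℝ)⁻¹) := by
      have h1 : π / ((1 + β)/(2*σ^2)) = σ^2 * ((2*π) / (1 + β)) := by
        field_simp
      rw [h1, Real.sqrt_mul (sq_nonneg σ), Real.sqrt_sq hσ.le,
        Real.sqrt_div h2π.le, Real.sqrt_eq_rpow (1 + β),
        show ((1:ℝ)/2) = (2:ℝ)⁻¹ by norm_num]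
      ring
    have hexp2 : Real.exp (-β*μ + β^2*σ^2/(2*(1+β))) ^ 2
        = Real.exp (-2*β*μ + β^2*σ^2/(1+β)) := by
      rw [sq, ← Real.exp_add, Real.exp_eq_exp]
      field_simp
      ring
    have hCsplit : (σ * Real.sqrt (2*π)) ^ (-(1 + β))
        = (σ ^ (1 + β) * Real.sqrt (2*π) ^ (1 + β))⁻¹ := by
      rw [← Real.mul_rpow hσ.le hτ.le, Real.rpow_neg (by positivity)]
    rw [hsqrt, hCsplit, Lstarstar]
    have e1 : ((1+β):ℝ)^((2:ℝ)⁻¹) ≠ 0 := (Real.rpow_pos_of_pos hQ _).ne'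
    have e3 : (σ:ℝ)^(2*β+2) ≠ 0 := (Real.rpow_pos_of_pos hσ _).ne'
    have e4 : ((2*π):ℝ)^β ≠ 0 := (Real.rpow_pos_of_pos h2π _).ne'
    have e5 : (σ:ℝ)^(1+β) ≠ 0 := (Real.rpow_pos_of_pos hσ _).ne'
    have e6 : (Real.sqrt (2*π))^(1+β) ≠ 0 := (Real.rpow_pos_of_pos hτ _).ne'
    field_simp [e1,e3,e4,e5,e6,hσ.ne',hτ.ne',hQ.ne']
    have hsp : Real.sqrt 2 * Real.sqrt π = (2*π)^((1:ℝ)/2) := by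
      rw [← Real.sqrt_mul (by norm_num : (0:ℝ) ≤ 2) π, Real.sqrt_eq_rpow]
    have hE : Real.exp ((-(β * μ * (2 * (1 + β))) + β ^ 2 * σ ^ 2) / (2 * (1 + β))) ^ 2
        = Real.exp ((-(2 * β * μ * (1 + β)) + β ^ 2 * σ ^ 2) / (1 + β)) := by
      rw [sq, ← Real.exp_add, Real.exp_eq_exp]
      field_simp
      ring
    have key : (Real.sqrt 2 * Real.sqrt π)^(2:ℕ) * σ^(2*β+2) * (2*π)^β * (1+β)^(3:ℕ)
        = (σ^(1+β))^(2:ℕ) * ((Real.sqrt 2 * Real.sqrt π)^(1+β))^(2:ℕ) * (1+β)^(2:ℕ) *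
          ((1+β)^((1:ℝ)/2))^(2:ℕ) := by
      rw [hsp]
      rw [← Real.rpow_natCast ((2*π)^((1:ℝ)/2)) 2, ← Real.rpow_mul h2π.le]
      rw [← Real.rpow_natCast (σ^(1+β)) 2, ← Real.rpow_mul hσ.le]
      rw [← Real.rpow_natCast (((2*π)^((1:ℝ)/2))^(1+β)) 2, ← Real.rpow_mul h2π.le,
        ← Real.rpow_mul h2π.le]
      rw [← Real.rpow_natCast ((1+β)^((1:ℝ)/2)) 2, ← Real.rpow_mul hQ.le]
      rw [← Real.rpow_natCast (1+β) 3, ← Real.rpow_natCast (1+β) 2]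
      rw [show ((1:ℝ)/2*(2:ℕ)) = (1:ℝ) by norm_num, Real.rpow_one,
        show ((1:ℝ)/2*(1+β)*(2:ℕ)) = 1+β by push_cast; ring,
        show ((1+β)*(2:ℕ) : ℝ) = 2*β+2 by push_cast; ring]
      rw [Real.rpow_add h2π 1 β, Real.rpow_one,
        show ((1+β):ℝ)^(((3:ℕ):ℝ)) = (1+β)^(((2:ℕ):ℝ))*(1+β)^(1:ℝ) from by
          rw [← Real.rpow_add hQ]; norm_num]
      ring
    have hh : ((1+β)^((1:ℝ)/2))^(2:ℕ) = 1+β := by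
      rw [← Real.sqrt_eq_rpow, Real.sq_sqrt hQ.le]
    rw [← Real.sqrt_mul (by norm_num : (0:ℝ) ≤ 2) π, hh] at key
    have key2 : Real.sqrt (2*π)^(2:ℕ) * σ^(2*β+2) * (2*π)^β
        = (σ^(1+β))^(2:ℕ) * (Real.sqrt (2*π)^(1+β))^(2:ℕ) := by
      apply mul_right_cancel₀ (pow_ne_zero 3 hQ.ne')
      linear_combination key
    have hE' : Real.exp (β * (-((1 + β) * 2 * μ) + β * σ ^ 2) / ((1 + β) * 2)) ^ 2
        = Real.exp (β * (-((1 + β) * 2 * μ) + β * σ ^ 2) / (1 + β)) := by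
      rw [sq, ← Real.exp_add, Real.exp_eq_exp]
      field_simp
      ring
    rw [show 2*(β+1) = 2*β+2 by ring, hE', hh]
    linear_combination ((1+β) * β^2 * σ^4 *
      Real.exp (β * (-((1 + β) * 2 * μ) + β * σ ^ 2) / (1 + β))) * key2
  rw [E1, E2]
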